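/- Let G = (V,E) be a finite connected simple graph and let B = { v ∈ V : G \ {v} is connected } be the set of non-cut vertices. Then for any cut vertex k ∈ V − B, every connected component of G \ {k} contains at least one vertex of B. -/

import Mathlib

/-- The graph `G*(S)` on vertex subset `S`: distinct `u, v ∈ S` are adjacent iff
there is a path (walk) between `u` and `v` in `G` all of whose intermediate
vertices lie outside `S`. Vertices outside `S` are isolated. -/
def GStar {V : Type} (G : SimpleGraph V) (S : Set V) : SimpleGraph V where
  Adj u v := u ≠ v ∧ u ∈ S ∧ v ∈ S ∧
    ∃ p : G.Walk u v, ∀ x ∈ p.support, x ≠ u → x ≠ v → x ∉ S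
  symm := ⟨by
    rintro u v ⟨hne, hu, hv, p, hp⟩
    refine ⟨hne.symm, hv, hu, p.reverse, ?_⟩
    intro x hx hxv hxu
    exact hp x (by simpa [SimpleGraph.Walk.support_reverse] using hx) hxu hxv⟩
  loopless := ⟨fun u h => h.1 rfl⟩

/-- `a` and `b` are joined by a walk in `G` whose vertices all lie in `A`
(i.e. they are in the same component of the induced subgraph on `A`). -/
def ReachIn {V : Type} (G : SimpleGraph V) (A : Set V) (a b : V) : Prop :=
  ∃ p : G.Walk a b, ∀ x ∈ p.support, x ∈ A

lemma ReachIn.trans' {V : Type} {G : SimpleGraph V} {A : Set V} {a b c : V}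
    (h1 : ReachIn G A a b) (h2 : ReachIn G A b c) : ReachIn G A a c := by
  obtain ⟨p, hp⟩ := h1
  obtain ⟨q, hq⟩ := h2
  refine ⟨p.append q, fun x hx => ?_⟩
  rcases (SimpleGraph.Walk.mem_support_append_iff _ _).mp hx with h | h
  · exact hp x h
  · exact hq x h

lemma reach_induce {V : Type} (G : SimpleGraph V) (s : Set V) {u v : V}
    (p : G.Walk u v) (hp : ∀ x ∈ p.support, x ∈ s) (hu : u ∈ s) (hv : v ∈ s) :
    (G.induce s).Reachable ⟨u, hu⟩ ⟨v, hv⟩ := by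
  induction p with
  | nil => rfl
  | @cons u w v h q ih =>
    have hw : w ∈ s := hp w (by simp)
    have hadj : (G.induce s).Adj ⟨u, hu⟩ ⟨w, hw⟩ := h
    exact hadj.reachable.trans (ih (fun x hx => hp x (by simp [hx])) hw hv)

/-- Let `G` be a finite connected simple graph and let `B` be the
set of non-cut vertices (those `v` with `G \ {v}` connected). Then for any cut
vertex `k`, every connected component of `G \ {k}` contains a vertex of `B`:
every vertex `a ≠ k` is joined, within `G \ {k}`, to some non-cut vertex `b`. -/
theorem stmt_10 {V : Type} [Fintype V] (G : SimpleGraph V) (hG : G.Connected)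
    (k : V) (hk : ¬ (G.induce ({k}ᶜ : Set V)).Connected) :
    ∀ a : V, a ≠ k →
      ∃ b : V, b ≠ k ∧ (G.induce ({b}ᶜ : Set V)).Connected ∧
        ReachIn G ({k}ᶜ : Set V) a b := by
  classical
  intro a ha
  let S : Finset V := Finset.univ.filter (fun v => v ≠ k ∧ ReachIn G ({k}ᶜ : Set V) a v)
  have haS : a ∈ S := by
    refine Finset.mem_filter.mpr ⟨Finset.mem_univ _, ha, SimpleGraph.Walk.nil, ?_⟩
    intro x hx
    simp only [SimpleGraph.Walk.support_nil, List.mem_singleton] at hx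
    subst hx
    simpa using ha
  obtain ⟨b, hbS, hmax⟩ := S.exists_max_image (fun v => G.dist k v) ⟨a, haS⟩
  obtain ⟨-, hbk, hreach⟩ := Finset.mem_filter.mp hbS
  -- key claim: every vertex other than `b` can be reached from `k` avoiding `b`
  have key : ∀ x : V, x ≠ b → ∃ p : G.Walk k x, b ∉ p.support := by
    intro x hx
    by_cases hxk : x = k
    · subst hxk
      exact ⟨SimpleGraph.Walk.nil, by simpa using hbk⟩
    by_cases hxr : ReachIn G ({k}ᶜ : Set V) a x
    · have hxS : x ∈ S := Finset.mem_filter.mpr ⟨Finset.mem_univ _, hxk, hxr⟩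
      have hdist : G.dist k x ≤ G.dist k b := hmax x hxS
      obtain ⟨p, hp, hlen⟩ := hG.exists_path_of_dist k x
      refine ⟨p, fun hb => ?_⟩
      have h1 : G.dist k b ≤ (p.takeUntil b hb).length := SimpleGraph.dist_le _
      have h2 : (p.dropUntil b hb).length ≠ 0 := by
        intro h0
        exact hx (SimpleGraph.Walk.eq_of_length_eq_zero (p := p.dropUntil b hb) h0).symm
      have h3 := congrArg SimpleGraph.Walk.length (p.take_spec hb)
      rw [SimpleGraph.Walk.length_append] at h3
      omega
    · obtain ⟨q, hq, -⟩ := hG.exists_path_of_dist k x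
      refine ⟨q, fun hb => ?_⟩
      set r := q.dropUntil b hb with hrdef
      have hknr : k ∉ r.support := by
        intro hkr
        have hsplit : q.support = (q.takeUntil b hb).support ++ r.support.tail := by
          rw [← SimpleGraph.Walk.support_append, q.take_spec hb]
        have hnd := hq.support_nodup
        rw [hsplit, List.nodup_append] at hnd
        have hk1 : k ∈ (q.takeUntil b hb).support := SimpleGraph.Walk.start_mem_support _
        have hk2 : k ∈ r.support.tail := by
          have := r.support_eq_cons
          rw [this] at hkr
          rcases List.mem_cons.mp hkr with h | h
          · exact absurd h.symm hbk
          · exact h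
        exact hnd.2.2 k hk1 k hk2 rfl
      have hbx : ReachIn G ({k}ᶜ : Set V) b x := by
        refine ⟨r, fun y hy => ?_⟩
        simp only [Set.mem_compl_iff, Set.mem_singleton_iff]
        rintro rfl
        exact hknr hy
      exact hxr (hreach.trans' hbx)
  refine ⟨b, hbk, ?_, hreach⟩
  have hkb : k ∈ ({b}ᶜ : Set V) := by
    simp only [Set.mem_compl_iff, Set.mem_singleton_iff]
    exact fun h => hbk h.symm
  rw [SimpleGraph.connected_iff]
  refine ⟨?_, ⟨⟨k, hkb⟩⟩⟩
  rintro ⟨u, hu⟩ ⟨v, hv⟩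
  have hub : u ≠ b := by simpa using hu
  have hvb : v ≠ b := by simpa using hv
  obtain ⟨p, hp⟩ := key u hub
  obtain ⟨q, hq⟩ := key v hvb
  have hsupp : ∀ x ∈ (p.reverse.append q).support, x ∈ ({b}ᶜ : Set V) := by
    intro x hx
    simp only [Set.mem_compl_iff, Set.mem_singleton_iff]
    rintro rfl
    rcases (SimpleGraph.Walk.mem_support_append_iff _ _).mp hx with h | h
    · rw [SimpleGraph.Walk.support_reverse] at h
      exact hp (List.mem_reverse.mp h)
    · exact hq h
  exact reach_induce G ({b}ᶜ : Set V) (p.reverse.append q) hsupp hu hv
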